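/- Let g(x,y) = p(x,y)/q(x,y) where p and q are bivariate quadratics with constant terms a₆, b₆ > 0 and all non-constant coefficients in [−c, c] for some c ≥ 0. Given ε > 0, if δ ∈ [0,1] satisfies δ ≤ ε·b₆²/(5c·(a₆ + (1+ε)·b₆)), a₆ > 5cδ, and b₆ > 5cδ, then for all x, y ∈ [−δ, δ] we have g(x,y) ∈ [a₆/b₆ − ε, a₆/b₆ + ε]. -/

import Mathlib

set_option maxHeartbeats 1000000

lemma termbd (a t c δ : ℝ) (ha : |a| ≤ c) (ht : |t| ≤ δ) : |a * t| ≤ c * δ := by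
  rw [abs_mul]
  exact mul_le_mul ha ht (abs_nonneg _) ((abs_nonneg a).trans ha)

lemma sumbd (t1 t2 t3 t4 t5 : ℝ) :
    |t1 + t2 + t3 + t4 + t5| ≤ |t1| + |t2| + |t3| + |t4| + |t5| :=
  (abs_add_le _ _).trans (add_le_add_left
    ((abs_add_le _ _).trans (add_le_add_left
      ((abs_add_le _ _).trans (add_le_add_left (abs_add_le _ _) _)) _)) _)

/-- Core value lemma, case (b): the quotient of two quadratics with small inputs
is within `ε` of the quotient of their constant terms. -/
theorem stmt4 (a₁ a₂ a₃ a₄ a₅ a₆ b₁ b₂ b₃ b₄ b₅ b₆ c δ ε : ℝ)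
    (ha₆ : 0 < a₆) (hb₆ : 0 < b₆) (hc : 0 ≤ c) (hε : 0 < ε)
    (ha₁ : a₁ ∈ Set.Icc (-c) c) (ha₂ : a₂ ∈ Set.Icc (-c) c) (ha₃ : a₃ ∈ Set.Icc (-c) c)
    (ha₄ : a₄ ∈ Set.Icc (-c) c) (ha₅ : a₅ ∈ Set.Icc (-c) c)
    (hb₁ : b₁ ∈ Set.Icc (-c) c) (hb₂ : b₂ ∈ Set.Icc (-c) c) (hb₃ : b₃ ∈ Set.Icc (-c) c)
    (hb₄ : b₄ ∈ Set.Icc (-c) c) (hb₅ : b₅ ∈ Set.Icc (-c) c)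
    (hδ : δ ∈ Set.Icc (0 : ℝ) 1)
    (hδε : δ ≤ ε * b₆ ^ 2 / (5 * c * (a₆ + (1 + ε) * b₆)))
    (hA : 5 * c * δ < a₆) (hB : 5 * c * δ < b₆) :
    ∀ x y : ℝ, x ∈ Set.Icc (-δ) δ → y ∈ Set.Icc (-δ) δ →
      (a₁ * x ^ 2 + a₂ * x * y + a₃ * y ^ 2 + a₄ * x + a₅ * y + a₆) /
          (b₁ * x ^ 2 + b₂ * x * y + b₃ * y ^ 2 + b₄ * x + b₅ * y + b₆) ∈
        Set.Icc (a₆ / b₆ - ε) (a₆ / b₆ + ε) := by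
  obtain ⟨hδ0, hδ1⟩ := hδ
  have ca₁ : |a₁| ≤ c := abs_le.mpr ⟨ha₁.1, ha₁.2⟩
  have ca₂ : |a₂| ≤ c := abs_le.mpr ⟨ha₂.1, ha₂.2⟩
  have ca₃ : |a₃| ≤ c := abs_le.mpr ⟨ha₃.1, ha₃.2⟩
  have ca₄ : |a₄| ≤ c := abs_le.mpr ⟨ha₄.1, ha₄.2⟩
  have ca₅ : |a₅| ≤ c := abs_le.mpr ⟨ha₅.1, ha₅.2⟩
  have cb₁ : |b₁| ≤ c := abs_le.mpr ⟨hb₁.1, hb₁.2⟩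
  have cb₂ : |b₂| ≤ c := abs_le.mpr ⟨hb₂.1, hb₂.2⟩
  have cb₃ : |b₃| ≤ c := abs_le.mpr ⟨hb₃.1, hb₃.2⟩
  have cb₄ : |b₄| ≤ c := abs_le.mpr ⟨hb₄.1, hb₄.2⟩
  have cb₅ : |b₅| ≤ c := abs_le.mpr ⟨hb₅.1, hb₅.2⟩
  have key : 5 * c * δ * (a₆ + (1 + ε) * b₆) ≤ ε * b₆ ^ 2 := by
    rcases eq_or_lt_of_le hc with h | h
    · subst h; nlinarith [mul_pos hε (pow_pos hb₆ 2)]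
    · have hpos : 0 < 5 * c * (a₆ + (1 + ε) * b₆) := by positivity
      rw [le_div_iff₀ hpos] at hδε
      nlinarith
  intro x y hx hy
  rw [Set.mem_Icc, ← abs_le] at hx hy
  have hx2 : |x ^ 2| ≤ δ := by
    rw [abs_pow]
    calc |x| ^ 2 ≤ δ ^ 2 := by nlinarith [abs_nonneg x]
    _ ≤ δ := by nlinarith
  have hy2 : |y ^ 2| ≤ δ := by
    rw [abs_pow]
    calc |y| ^ 2 ≤ δ ^ 2 := by nlinarith [abs_nonneg y]
    _ ≤ δ := by nlinarith
  have hxy : |x * y| ≤ δ := by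
    rw [abs_mul]
    nlinarith [abs_nonneg x, abs_nonneg y]
  set N := a₁ * x ^ 2 + a₂ * x * y + a₃ * y ^ 2 + a₄ * x + a₅ * y with hN
  set D := b₁ * x ^ 2 + b₂ * x * y + b₃ * y ^ 2 + b₄ * x + b₅ * y with hD
  have hNb : |N| ≤ 5 * (c * δ) := by
    calc |N| = |a₁ * x ^ 2 + a₂ * (x * y) + a₃ * y ^ 2 + a₄ * x + a₅ * y| := by
          rw [hN]; ring_nf
    _ ≤ |a₁ * x ^ 2| + |a₂ * (x * y)| + |a₃ * y ^ 2| + |a₄ * x| + |a₅ * y| := sumbd _ _ _ _ _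
    _ ≤ c * δ + c * δ + c * δ + c * δ + c * δ :=
          add_le_add (add_le_add (add_le_add (add_le_add
            (termbd _ _ _ _ ca₁ hx2) (termbd _ _ _ _ ca₂ hxy)) (termbd _ _ _ _ ca₃ hy2))
            (termbd _ _ _ _ ca₄ hx)) (termbd _ _ _ _ ca₅ hy)
    _ = 5 * (c * δ) := by ring
  have hDb : |D| ≤ 5 * (c * δ) := by
    calc |D| = |b₁ * x ^ 2 + b₂ * (x * y) + b₃ * y ^ 2 + b₄ * x + b₅ * y| := by
          rw [hD]; ring_nf
    _ ≤ |b₁ * x ^ 2| + |b₂ * (x * y)| + |b₃ * y ^ 2| + |b₄ * x| + |b₅ * y| := sumbd _ _ _ _ _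
    _ ≤ c * δ + c * δ + c * δ + c * δ + c * δ :=
          add_le_add (add_le_add (add_le_add (add_le_add
            (termbd _ _ _ _ cb₁ hx2) (termbd _ _ _ _ cb₂ hxy)) (termbd _ _ _ _ cb₃ hy2))
            (termbd _ _ _ _ cb₄ hx)) (termbd _ _ _ _ cb₅ hy)
    _ = 5 * (c * δ) := by ring
  rw [abs_le] at hNb hDb
  have hq : 0 < D + b₆ := by nlinarith
  have hmain : |(N + a₆) / (D + b₆) - a₆ / b₆| ≤ ε := by
    have heq : (N + a₆) / (D + b₆) - a₆ / b₆ = (b₆ * N - a₆ * D) / ((D + b₆) * b₆) := by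
      field_simp; ring
    rw [heq, abs_div, abs_of_pos (mul_pos hq hb₆), div_le_iff₀ (mul_pos hq hb₆), abs_le]
    have h1 := mul_le_mul_of_nonneg_left hNb.2 hb₆.le
    have h1' := mul_le_mul_of_nonneg_left hNb.1 hb₆.le
    have h2 := mul_le_mul_of_nonneg_left hDb.1 ha₆.le
    have h2' := mul_le_mul_of_nonneg_left hDb.2 ha₆.le
    have h3 := mul_le_mul_of_nonneg_left hDb.1 (mul_pos hε hb₆).le
    constructor <;> nlinarith [key, h1, h1', h2, h2', h3]
  rw [abs_le] at hmain
  have hrw : (a₁ * x ^ 2 + a₂ * x * y + a₃ * y ^ 2 + a₄ * x + a₅ * y + a₆) /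
      (b₁ * x ^ 2 + b₂ * x * y + b₃ * y ^ 2 + b₄ * x + b₅ * y + b₆) = (N + a₆) / (D + b₆) := by
    rw [hN, hD]
  rw [hrw]
  exact ⟨by linarith [hmain.1], by linarith [hmain.2]⟩
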